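/- arXiv:2408.13527 — 6 statements merged into one kernel-verified Lean document; each statement's English description precedes it below -/
import Mathlib

section
/- Let (Ω, 𝒜, μ) be a measure space and let f : Ω → ℂ be measurable with ∫⁻ ENNReal.ofReal (Real.log (1 + |f x|)) ∂μ < ∞. Then the function α ↦ ∫⁻ ENNReal.ofReal (Real.log (1 + |α * f x|)) ∂μ tends to 0 as the complex number α tends to 0. -/
open MeasureTheory Filter ENNReal

theorem lognorm_smul_tendsto_zero {Ω : Type*} [MeasurableSpace Ω] (μ : Measure Ω)
    (f : Ω → ℂ) (hf : Measurable f)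
    (hfin : ∫⁻ x, ENNReal.ofReal (Real.log (1 + ‖f x‖)) ∂μ < ∞) :
    Tendsto (fun α : ℂ =>
        ∫⁻ x, ENNReal.ofReal (Real.log (1 + ‖α * f x‖)) ∂μ)
      (nhds 0) (nhds 0) := by
  have h0 : (0 : ℝ≥0∞) = ∫⁻ x, (0 : ℝ≥0∞) ∂μ := by simp
  rw [h0]
  apply tendsto_lintegral_filter_of_dominated_convergence
    (fun x => ENNReal.ofReal (Real.log (1 + ‖f x‖)))
  · filter_upwards with α
    apply ENNReal.measurable_ofReal.comp
    apply Real.measurable_log.comp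
    exact (measurable_const.add ((continuous_norm.measurable).comp ((measurable_const.mul hf))))
  · have hball : ∀ᶠ α : ℂ in nhds 0, ‖α‖ ≤ 1 := by
      have : Tendsto (fun α : ℂ => ‖α‖) (nhds 0) (nhds 0) := by
        simpa using continuous_norm.tendsto (0 : ℂ)
      exact this.eventually_le_const (by norm_num)
    filter_upwards [hball] with α hα
    filter_upwards with x
    apply ENNReal.ofReal_le_ofReal
    apply Real.log_le_log (by positivity)
    have : ‖α * f x‖ ≤ ‖f x‖ := by
      rw [norm_mul]
      calc ‖α‖ * ‖f x‖ ≤ 1 * ‖f x‖ := by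
            exact mul_le_mul_of_nonneg_right hα (norm_nonneg _)
        _ = ‖f x‖ := one_mul _
    linarith
  · exact hfin.ne
  · filter_upwards with x
    have h1 : Tendsto (fun α : ℂ => 1 + ‖α * f x‖) (nhds 0) (nhds 1) := by
      have : Tendsto (fun α : ℂ => ‖α * f x‖) (nhds 0) (nhds 0) := by
        simp only [norm_mul]
        simpa using (continuous_norm.tendsto (0 : ℂ)).mul_const ‖f x‖
      simpa using (tendsto_const_nhds.add this)
    have h2 : Tendsto (fun α : ℂ => Real.log (1 + ‖α * f x‖)) (nhds 0)
        (nhds 0) := by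
      have := (Real.continuousAt_log (by norm_num : (1:ℝ) ≠ 0)).tendsto.comp h1
      simpa [Function.comp_def] using this
    have := (ENNReal.continuous_ofReal.tendsto 0).comp h2
    simpa [Function.comp_def] using this
end

section
/- Let (Ω, 𝒜, μ) be a measure space and let f, g : Ω → ℂ be measurable functions such that ∫⁻ ENNReal.ofReal (Real.log (1 + |f x|)) ∂μ < ∞ and ∫⁻ ENNReal.ofReal (Real.log (1 + |g x|)) ∂μ < ∞. Then ∫⁻ ENNReal.ofReal (Real.log (1 + |f x * g x|)) ∂μ < ∞. -/
open MeasureTheory ENNReal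

theorem lognorm_mul_lt_top {Ω : Type*} [MeasurableSpace Ω] (μ : Measure Ω)
    (f g : Ω → ℂ) (hf : Measurable f) (hg : Measurable g)
    (hf' : ∫⁻ x, ENNReal.ofReal (Real.log (1 + ‖f x‖)) ∂μ < ∞)
    (hg' : ∫⁻ x, ENNReal.ofReal (Real.log (1 + ‖g x‖)) ∂μ < ∞) :
    ∫⁻ x, ENNReal.ofReal (Real.log (1 + ‖f x * g x‖)) ∂μ < ∞ := by
  have hmeas : Measurable fun x => ENNReal.ofReal (Real.log (1 + ‖f x‖)) :=
    ENNReal.measurable_ofReal.comp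
      (Real.measurable_log.comp (measurable_const.add (hf.norm)))
  have hbound : ∀ x, ENNReal.ofReal (Real.log (1 + ‖f x * g x‖)) ≤
      ENNReal.ofReal (Real.log (1 + ‖f x‖)) +
      ENNReal.ofReal (Real.log (1 + ‖g x‖)) := by
    intro x
    set a := ‖f x‖ with ha
    set b := ‖g x‖ with hb
    have ha0 : 0 ≤ a := norm_nonneg _
    have hb0 : 0 ≤ b := norm_nonneg _
    have h1 : 1 + a * b ≤ (1 + a) * (1 + b) := by nlinarith
    have hlog : Real.log (1 + a * b) ≤ Real.log (1 + a) + Real.log (1 + b) := by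
      calc Real.log (1 + a * b) ≤ Real.log ((1 + a) * (1 + b)) :=
            Real.log_le_log (by nlinarith) h1
        _ = Real.log (1 + a) + Real.log (1 + b) :=
            Real.log_mul (by nlinarith) (by nlinarith)
    calc ENNReal.ofReal (Real.log (1 + ‖f x * g x‖))
        = ENNReal.ofReal (Real.log (1 + a * b)) := by rw [norm_mul]
      _ ≤ ENNReal.ofReal (Real.log (1 + a) + Real.log (1 + b)) :=
          ENNReal.ofReal_le_ofReal hlog
      _ ≤ ENNReal.ofReal (Real.log (1 + a)) + ENNReal.ofReal (Real.log (1 + b)) :=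
          ENNReal.ofReal_add_le
  calc ∫⁻ x, ENNReal.ofReal (Real.log (1 + ‖f x * g x‖)) ∂μ
      ≤ ∫⁻ x, (ENNReal.ofReal (Real.log (1 + ‖f x‖)) +
          ENNReal.ofReal (Real.log (1 + ‖g x‖))) ∂μ :=
        lintegral_mono hbound
    _ = (∫⁻ x, ENNReal.ofReal (Real.log (1 + ‖f x‖)) ∂μ) +
        ∫⁻ x, ENNReal.ofReal (Real.log (1 + ‖g x‖)) ∂μ :=
        lintegral_add_left hmeas _
    _ < ∞ := ENNReal.add_lt_top.mpr ⟨hf', hg'⟩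
end

section
/- Let (Ω, 𝒜, μ) be a σ-finite measure space and let h : Ω → ℝ≥0 be measurable. Suppose h is not essentially bounded, i.e. there is no constant C with h x ≤ C for μ-almost every x. Then there exists a measurable function f : Ω → ℝ with f ≥ 0 such that ∫⁻ ENNReal.ofReal (Real.log (1 + f x)) ∂μ < ∞ but ∫⁻ ENNReal.ofReal (Real.log (1 + f x)) ∂(μ.withDensity h) = ∞. -/
open MeasureTheory ENNReal

theorem exists_log_integrable_not_withDensity {Ω : Type*} [MeasurableSpace Ω]
    (μ : Measure Ω) [SigmaFinite μ] (h : Ω → NNReal) (hh : Measurable h)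
    (hub : ¬ ∃ C : NNReal, ∀ᵐ x ∂μ, h x ≤ C) :
    ∃ f : Ω → ℝ, Measurable f ∧ (∀ x, 0 ≤ f x) ∧
      (∫⁻ x, ENNReal.ofReal (Real.log (1 + f x)) ∂μ < ∞) ∧
      (∫⁻ x, ENNReal.ofReal (Real.log (1 + f x))
          ∂(μ.withDensity fun x => (h x : ENNReal)) = ∞) := by
  set ν : Measure Ω := μ.withDensity fun x => (h x : ℝ≥0∞) with hν
  -- the sets where h is large have positive measure
  have hS : ∀ n : ℕ, 0 < μ {x | (2 : NNReal) ^ n ≤ h x} := by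
    intro n
    rcases eq_or_lt_of_le (zero_le : 0 ≤ μ {x | (2 : NNReal) ^ n ≤ h x}) with h0 | h0
    · exfalso
      apply hub
      refine ⟨2 ^ n, ?_⟩
      rw [ae_iff]
      refine measure_mono_null ?_ h0.symm
      intro x hx
      simp only [Set.mem_setOf_eq, not_le] at hx
      exact le_of_lt hx
    · exact h0
  have hSm : ∀ n : ℕ, MeasurableSet {x | (2 : NNReal) ^ n ≤ h x} :=
    fun n => measurableSet_le measurable_const hh
  choose A hAm hAsub hApos hAlt using fun n : ℕ =>
    Measure.exists_subset_measure_lt_top (hSm n) (hS n)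
  -- the coefficients
  set c : ℕ → ℝ≥0∞ := fun n => (2 : ℝ≥0∞)⁻¹ ^ n * (μ (A n))⁻¹ with hc
  set F : Ω → ℝ≥0∞ := fun x => ∑' n, Set.indicator (A n) (fun _ => c n) x with hF
  have hFm : Measurable F :=
    Measurable.ennreal_tsum fun n => measurable_const.indicator (hAm n)
  have hterm : ∀ n, c n * μ (A n) = (2 : ℝ≥0∞)⁻¹ ^ n := by
    intro n
    rw [hc, mul_assoc, ENNReal.inv_mul_cancel (hApos n).ne' (hAlt n).ne, mul_one]
  -- μ-integral of F is finite
  have hFμ : ∫⁻ x, F x ∂μ = ∑' n, c n * μ (A n) := by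
    rw [hF]
    rw [lintegral_tsum fun n => (measurable_const.indicator (hAm n)).aemeasurable]
    congr 1
    ext n
    rw [lintegral_indicator_const (hAm n)]
  have hFμ_lt : ∫⁻ x, F x ∂μ < ∞ := by
    rw [hFμ]
    have : ∑' n, c n * μ (A n) = ∑' n : ℕ, (2 : ℝ≥0∞)⁻¹ ^ n := by
      congr 1; ext n; exact hterm n
    rw [this, ENNReal.tsum_geometric, ENNReal.one_sub_inv_two, inv_inv]
    exact ENNReal.ofNat_lt_top
  -- ν-integral of F is infinite
  have hνA : ∀ n, (2 : ℝ≥0∞) ^ n * μ (A n) ≤ ν (A n) := by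
    intro n
    rw [hν, withDensity_apply _ (hAm n)]
    calc (2 : ℝ≥0∞) ^ n * μ (A n) = ∫⁻ _ in A n, (2 : ℝ≥0∞) ^ n ∂μ := by
          rw [setLIntegral_const]
      _ ≤ ∫⁻ x in A n, (h x : ℝ≥0∞) ∂μ := by
          refine setLIntegral_mono hh.coe_nnreal_ennreal fun x hx => ?_
          have := hAsub n hx
          simp only [Set.mem_setOf_eq] at this
          calc (2 : ℝ≥0∞) ^ n = ((2 : NNReal) ^ n : NNReal) := by
                push_cast; ring
            _ ≤ (h x : ℝ≥0∞) := by exact_mod_cast this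
  have hone : ∀ n, (1 : ℝ≥0∞) ≤ c n * ν (A n) := by
    intro n
    have h1 : (2 : ℝ≥0∞)⁻¹ ^ n * (2 : ℝ≥0∞) ^ n = 1 := by
      rw [← ENNReal.inv_pow,
        ENNReal.inv_mul_cancel (by positivity) (ENNReal.pow_ne_top ENNReal.ofNat_ne_top)]
    have h2 : (μ (A n))⁻¹ * μ (A n) = 1 := ENNReal.inv_mul_cancel (hApos n).ne' (hAlt n).ne
    calc (1 : ℝ≥0∞) = c n * ((2 : ℝ≥0∞) ^ n * μ (A n)) := by
          have : c n = (2 : ℝ≥0∞)⁻¹ ^ n * (μ (A n))⁻¹ := rfl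
          rw [this, mul_mul_mul_comm, h1, h2, mul_one]
      _ ≤ c n * ν (A n) := mul_le_mul_right (hνA n) _
  have hFν : ∫⁻ x, F x ∂ν = ∞ := by
    have hsum : ∫⁻ x, F x ∂ν = ∑' n, c n * ν (A n) := by
      rw [hF, lintegral_tsum fun n => (measurable_const.indicator (hAm n)).aemeasurable]
      congr 1
      ext n
      rw [lintegral_indicator_const (hAm n)]
    rw [hsum, eq_top_iff]
    calc (⊤ : ℝ≥0∞) = ∑' _ : ℕ, (1 : ℝ≥0∞) :=
          (ENNReal.tsum_const_eq_top_of_ne_zero one_ne_zero).symm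
      _ ≤ ∑' n, c n * ν (A n) := ENNReal.tsum_le_tsum hone
  -- F is finite μ-a.e., hence ν-a.e.
  have hfin : ∀ᵐ x ∂μ, F x ≠ ∞ :=
    (ae_lt_top hFm hFμ_lt.ne).mono fun x hx => hx.ne
  -- define f
  refine ⟨fun x => Real.exp ((F x).toReal) - 1, ?_, ?_, ?_, ?_⟩
  · exact (Real.measurable_exp.comp hFm.ennreal_toReal).sub measurable_const
  · intro x
    show 0 ≤ Real.exp ((F x).toReal) - 1
    have : (1 : ℝ) ≤ Real.exp ((F x).toReal) := by
      rw [← Real.exp_zero]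
      exact Real.exp_le_exp.mpr ENNReal.toReal_nonneg
    linarith
  · have hlog : ∀ x, Real.log (1 + (Real.exp ((F x).toReal) - 1)) = (F x).toReal := by
      intro x
      rw [show 1 + (Real.exp ((F x).toReal) - 1) = Real.exp ((F x).toReal) by ring,
        Real.log_exp]
    calc ∫⁻ x, ENNReal.ofReal (Real.log (1 + (Real.exp ((F x).toReal) - 1))) ∂μ
        = ∫⁻ x, ENNReal.ofReal ((F x).toReal) ∂μ := by
          congr 1; ext x; rw [hlog x]
      _ ≤ ∫⁻ x, F x ∂μ := lintegral_mono fun x => ENNReal.ofReal_toReal_le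
      _ < ∞ := hFμ_lt
  · have hlog : ∀ x, Real.log (1 + (Real.exp ((F x).toReal) - 1)) = (F x).toReal := by
      intro x
      rw [show 1 + (Real.exp ((F x).toReal) - 1) = Real.exp ((F x).toReal) by ring,
        Real.log_exp]
    have hae : (fun x => ENNReal.ofReal ((F x).toReal)) =ᵐ[ν] F := by
      have hμae : (fun x => ENNReal.ofReal ((F x).toReal)) =ᵐ[μ] F :=
        hfin.mono fun x hx => ENNReal.ofReal_toReal hx
      exact (withDensity_absolutelyContinuous μ _).ae_eq hμae
    calc ∫⁻ x, ENNReal.ofReal (Real.log (1 + (Real.exp ((F x).toReal) - 1))) ∂ν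
        = ∫⁻ x, ENNReal.ofReal ((F x).toReal) ∂ν := by
          congr 1; ext x; rw [hlog x]
      _ = ∫⁻ x, F x ∂ν := lintegral_congr_ae hae
      _ = ∞ := hFν
end

section
/- Let (Ω, 𝒜, μ) be a σ-finite measure space and let h : Ω → ℝ≥0 be measurable, and set ν = μ.withDensity h. Then the following are equivalent: (i) for every measurable f : Ω → ℂ, ∫⁻ ENNReal.ofReal (Real.log (1 + |f x|)) ∂μ < ∞ implies ∫⁻ ENNReal.ofReal (Real.log (1 + |f x|)) ∂ν < ∞; (ii) there exists a constant C with h x ≤ C for μ-almost every x. -/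
open MeasureTheory ENNReal
open scoped NNReal

theorem loglog_subset_iff_bounded {Ω : Type*} [MeasurableSpace Ω]
    (μ : Measure Ω) [SigmaFinite μ] (h : Ω → NNReal) (hh : Measurable h) :
    (∀ f : Ω → ℂ, Measurable f →
        ∫⁻ x, ENNReal.ofReal (Real.log (1 + ‖f x‖)) ∂μ < ∞ →
        ∫⁻ x, ENNReal.ofReal (Real.log (1 + ‖f x‖))
          ∂(μ.withDensity fun x => (h x : ENNReal)) < ∞) ↔
      ∃ C : NNReal, ∀ᵐ x ∂μ, h x ≤ C := by
  constructor
  · -- forward direction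
    intro H
    by_contra hC
    push_neg at hC
    have hT : ∀ C : ℝ≥0, μ {x | C < h x} ≠ 0 := by
      intro C
      have h1 := hC C
      rw [Filter.Frequently, ae_iff] at h1
      simpa [not_le] using h1
    -- annuli
    set A : ℕ → Set Ω := fun n => h ⁻¹' Set.Ico ((4 : ℝ≥0) ^ n) (4 ^ (n + 1)) with hAdef
    have hAm : ∀ n, MeasurableSet (A n) := fun n => hh measurableSet_Ico
    have hAd : Pairwise (Function.onFun Disjoint A) := by
      intro n m hnm
      rcases hnm.lt_or_gt with hlt | hlt
      · refine Set.disjoint_left.mpr ?_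
        rintro x ⟨_, hx2⟩ ⟨hx3, _⟩
        exact absurd (hx2.trans_le ((pow_le_pow_right₀ (by norm_num : (1:ℝ≥0) ≤ 4)
          (by omega : n + 1 ≤ m)).trans hx3)) (lt_irrefl _)
      · refine Set.disjoint_right.mpr ?_
        rintro x ⟨_, hx2⟩ ⟨hx3, _⟩
        exact absurd (hx2.trans_le ((pow_le_pow_right₀ (by norm_num : (1:ℝ≥0) ≤ 4)
          (by omega : m + 1 ≤ n)).trans hx3)) (lt_irrefl _)
    -- infinitely many annuli have positive measure
    have hfreq : ∃ᶠ n in Filter.atTop, μ (A n) ≠ 0 := by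
      rw [Filter.frequently_atTop]
      intro N
      by_contra hcon
      push_neg at hcon
      have hsub : {x | (4 : ℝ≥0) ^ N < h x} ⊆ ⋃ n, A (N + n) := by
        intro x hx
        have hex : ∃ k, h x < 4 ^ k :=
          pow_unbounded_of_one_lt (h x) (by norm_num : (1:ℝ≥0) < 4)
        classical
        set k0 := Nat.find hex with hk0def
        have hk0 : h x < 4 ^ k0 := Nat.find_spec hex
        have hNk0 : N < k0 := by
          by_contra hle
          push_neg at hle
          exact absurd (hk0.trans_le (pow_le_pow_right₀ (by norm_num : (1:ℝ≥0) ≤ 4) hle)) 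
            (not_lt.mpr hx.le)
        have hk0' : ¬ h x < 4 ^ (k0 - 1) := Nat.find_min hex (by omega)
        refine Set.mem_iUnion.mpr ⟨k0 - 1 - N, ?_⟩
        have hidx : N + (k0 - 1 - N) = k0 - 1 := by omega
        rw [hidx]
        refine ⟨not_lt.mp hk0', ?_⟩
        have : k0 - 1 + 1 = k0 := by omega
        rw [this]
        exact hk0
      have hnull : μ (⋃ n, A (N + n)) = 0 :=
        measure_iUnion_null fun n => hcon (N + n) (Nat.le_add_right _ _)
      exact hT (4 ^ N) (measure_mono_null hsub hnull)
    obtain ⟨φ, hφ, hφA⟩ := Filter.extraction_of_frequently_atTop hfreq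
    -- finite positive measure subsets
    have hsubset : ∀ k, ∃ t, MeasurableSet t ∧ t ⊆ A (φ k) ∧ 0 < μ t ∧ μ t < ∞ :=
      fun k => Measure.exists_subset_measure_lt_top (hAm (φ k)) (hφA k).bot_lt
    choose E hEm hEsub hEpos hEfin using hsubset
    have hEd : Pairwise (Function.onFun Disjoint E) := fun i j hij =>
      (hAd (hφ.injective.ne hij)).mono (hEsub i) (hEsub j)
    -- weights
    set a : ℕ → ℝ≥0∞ := fun k => ((2 : ℝ≥0∞) ^ (φ k))⁻¹ * (μ (E k))⁻¹ with hadef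
    have ha_top : ∀ k, a k ≠ ∞ := by
      intro k
      exact ENNReal.mul_ne_top (ENNReal.inv_ne_top.mpr (pow_ne_zero _ two_ne_zero))
        (ENNReal.inv_ne_top.mpr (hEpos k).ne')
    set G : Ω → ℝ≥0∞ := fun x => ∑' k, (E k).indicator (fun _ => a k) x with hGdef
    have hGm : Measurable G :=
      Measurable.ennreal_tsum fun k => measurable_const.indicator (hEm k)
    have hGfin : ∀ x, G x ≠ ∞ := by
      intro x
      by_cases hx : ∃ k, x ∈ E k
      · obtain ⟨k0, hk0⟩ := hx
        have hGx : G x = (E k0).indicator (fun _ => a k0) x := by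
          refine tsum_eq_single k0 fun j hj => Set.indicator_of_notMem ?_ _
          exact fun hxj => Set.disjoint_left.mp (hEd hj) hxj hk0
        rw [hGx, Set.indicator_of_mem hk0]
        exact ha_top k0
      · push_neg at hx
        have hGx : G x = 0 := by
          have : ∀ k, (E k).indicator (fun _ => a k) x = 0 :=
            fun k => Set.indicator_of_notMem (hx k) _
          simp [hGdef, this]
        simp [hGx]
    -- integral of G against any measure
    have hint : ∀ ρ : Measure Ω, ∫⁻ x, G x ∂ρ = ∑' k, a k * ρ (E k) := by
      intro ρ
      rw [hGdef]
      rw [lintegral_tsum fun k => (measurable_const.indicator (hEm k)).aemeasurable]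
      exact tsum_congr fun k => lintegral_indicator_const (hEm k) (a k)
    -- μ-integral is finite
    have hμG : ∫⁻ x, G x ∂μ < ∞ := by
      rw [hint μ]
      have hterm : ∀ k, a k * μ (E k) = ((2 : ℝ≥0∞) ^ (φ k))⁻¹ := by
        intro k
        rw [hadef]
        simp only
        rw [mul_assoc, ENNReal.inv_mul_cancel (hEpos k).ne' (hEfin k).ne, mul_one]
      calc ∑' k, a k * μ (E k) ≤ ∑' k, ((2 : ℝ≥0∞)⁻¹) ^ k := by
            refine ENNReal.tsum_le_tsum fun k => ?_
            rw [hterm k]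
            calc ((2 : ℝ≥0∞) ^ (φ k))⁻¹ ≤ ((2 : ℝ≥0∞) ^ k)⁻¹ :=
                  ENNReal.inv_le_inv.mpr
                    (pow_le_pow_right₀ (one_le_two : (1:ℝ≥0∞) ≤ 2) hφ.le_apply)
              _ = ((2 : ℝ≥0∞)⁻¹) ^ k := by rw [ENNReal.inv_pow]
        _ = (1 - 2⁻¹)⁻¹ := ENNReal.tsum_geometric _
        _ < ∞ := by
            rw [ENNReal.one_sub_inv_two, inv_inv]
            exact ofNat_lt_top
    -- ν-integral is infinite
    set ν : Measure Ω := μ.withDensity fun x => (h x : ℝ≥0∞) with hνdef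
    have hνG : ∫⁻ x, G x ∂ν = ∞ := by
      rw [hint ν]
      have hterm : ∀ k, (1 : ℝ≥0∞) ≤ a k * ν (E k) := by
        intro k
        have h4 : ((4 : ℝ≥0∞)) ^ (φ k) * μ (E k) ≤ ν (E k) := by
          rw [hνdef, withDensity_apply _ (hEm k)]
          calc (4 : ℝ≥0∞) ^ (φ k) * μ (E k) = ∫⁻ _ in E k, (4 : ℝ≥0∞) ^ (φ k) ∂μ :=
                (setLIntegral_const _ _).symm
            _ ≤ ∫⁻ x in E k, (h x : ℝ≥0∞) ∂μ := by
                refine setLIntegral_mono (hh.coe_nnreal_ennreal) fun x hx => ?_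
                have hx' : (4 : ℝ≥0) ^ (φ k) ≤ h x := (hEsub k hx).1
                calc (4 : ℝ≥0∞) ^ (φ k) = ((4 : ℝ≥0) ^ (φ k) : ℝ≥0) := by
                      push_cast; ring
                  _ ≤ (h x : ℝ≥0∞) := ENNReal.coe_le_coe.mpr hx'
        have h2 : ((2 : ℝ≥0∞) ^ (φ k))⁻¹ * 2 ^ (φ k) = 1 :=
          ENNReal.inv_mul_cancel (pow_ne_zero _ two_ne_zero) (pow_ne_top ofNat_ne_top)
        have h3 : (μ (E k))⁻¹ * μ (E k) = 1 :=
          ENNReal.inv_mul_cancel (hEpos k).ne' (hEfin k).ne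
        have h42 : (4 : ℝ≥0∞) ^ (φ k) = 2 ^ (φ k) * 2 ^ (φ k) := by
          rw [← mul_pow]; norm_num
        have hkey : a k * ((4 : ℝ≥0∞) ^ (φ k) * μ (E k)) = 2 ^ (φ k) := by
          calc a k * ((4 : ℝ≥0∞) ^ (φ k) * μ (E k))
              = ((2 : ℝ≥0∞) ^ (φ k))⁻¹ * 2 ^ (φ k) * ((μ (E k))⁻¹ * μ (E k)) * 2 ^ (φ k) := by
                rw [hadef]; simp only; rw [h42]; ring
            _ = 2 ^ (φ k) := by rw [h2, h3]; ring
        calc (1 : ℝ≥0∞) ≤ 2 ^ (φ k) := Left.one_le_pow_of_le one_le_two _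
          _ = a k * ((4 : ℝ≥0∞) ^ (φ k) * μ (E k)) := hkey.symm
          _ ≤ a k * ν (E k) := mul_le_mul_right h4 _
      have h1 : (∑' _ : ℕ, (1 : ℝ≥0∞)) ≤ ∑' k, a k * ν (E k) := ENNReal.tsum_le_tsum hterm
      rw [tsum_const_eq_top_of_ne_zero one_ne_zero] at h1
      exact top_le_iff.mp h1
    -- the test function
    set f : Ω → ℂ := fun x => ((Real.exp (G x).toReal - 1 : ℝ) : ℂ) with hfdef
    have hfm : Measurable f :=
      Complex.measurable_ofReal.comp
        ((Real.measurable_exp.comp hGm.ennreal_toReal).sub measurable_const)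
    have hpt : ∀ x, ENNReal.ofReal (Real.log (1 + ‖f x‖)) = G x := by
      intro x
      have ht : 0 ≤ (G x).toReal := ENNReal.toReal_nonneg
      have h1 : ‖f x‖ = Real.exp (G x).toReal - 1 := by
        rw [hfdef]
        simp only
        rw [Complex.norm_real, Real.norm_eq_abs, abs_of_nonneg (by linarith [Real.one_le_exp ht])]
      rw [h1, show 1 + (Real.exp (G x).toReal - 1) = Real.exp (G x).toReal by ring,
        Real.log_exp, ENNReal.ofReal_toReal (hGfin x)]
    have hμ' : ∫⁻ x, ENNReal.ofReal (Real.log (1 + ‖f x‖)) ∂μ < ∞ := by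
      simp only [hpt]; exact hμG
    have hν' := H f hfm hμ'
    simp only [hpt] at hν'
    rw [hνG] at hν'
    exact absurd hν' (lt_irrefl _)
  · -- backward direction
    rintro ⟨C, hC⟩ f hf hμf
    have hg : Measurable fun x => ENNReal.ofReal (Real.log (1 + ‖f x‖)) :=
      Measurable.ennreal_ofReal
        ((measurable_const.add (continuous_norm.measurable.comp hf)).log)
    rw [lintegral_withDensity_eq_lintegral_mul μ hh.coe_nnreal_ennreal hg]
    have hb : ∫⁻ x, ((h x : ℝ≥0∞) *
        ENNReal.ofReal (Real.log (1 + ‖f x‖))) ∂μ ≤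
        ∫⁻ x, (C : ℝ≥0∞) * ENNReal.ofReal (Real.log (1 + ‖f x‖)) ∂μ := by
      refine lintegral_mono_ae ?_
      filter_upwards [hC] with x hx
      exact mul_le_mul_left (ENNReal.coe_le_coe.mpr hx) _
    calc ∫⁻ x, ((fun x => (h x : ℝ≥0∞)) * fun x =>
          ENNReal.ofReal (Real.log (1 + ‖f x‖))) x ∂μ
        ≤ ∫⁻ x, (C : ℝ≥0∞) * ENNReal.ofReal (Real.log (1 + ‖f x‖)) ∂μ := hb
      _ = (C : ℝ≥0∞) * ∫⁻ x, ENNReal.ofReal (Real.log (1 + ‖f x‖)) ∂μ :=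
          lintegral_const_mul _ hg
      _ < ∞ := ENNReal.mul_lt_top coe_lt_top hμf
end

section
/- Let (Ω, 𝒜, μ) be a σ-finite measure space and let h : Ω → ℝ≥0 be measurable with 0 < h x < ∞ for μ-almost every x, and set ν = μ.withDensity h. Then the following are equivalent: (i) for every measurable f : Ω → ℂ, ∫⁻ ENNReal.ofReal (Real.log (1 + |f x|)) ∂μ < ∞ if and only if ∫⁻ ENNReal.ofReal (Real.log (1 + |f x|)) ∂ν < ∞; (ii) there exist constants c > 0 and C < ∞ such that c ≤ h x ≤ C for μ-almost every x. -/
open MeasureTheory ENNReal NNReal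

lemma loglog_abs_helper (a : ℝ) (ha : 0 ≤ a) :
    ENNReal.ofReal (Real.log (1 + ‖((Real.exp a - 1 : ℝ) : ℂ)‖)) =
      ENNReal.ofReal a := by
  have h1 : (1:ℝ) ≤ Real.exp a := Real.one_le_exp ha
  rw [Complex.norm_real, Real.norm_eq_abs, abs_of_nonneg (by linarith)]
  have h2 : 1 + (Real.exp a - 1) = Real.exp a := by ring
  rw [h2, Real.log_exp]

lemma loglog_tsum_ne_top : (∑' n : ℕ, (2:ℝ≥0∞)⁻¹ ^ n) ≠ ∞ := by
  rw [ENNReal.tsum_geometric]; simp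

lemma loglog_pow_mul_inv_pow (n : ℕ) : (2:ℝ≥0∞) ^ n * (2:ℝ≥0∞)⁻¹ ^ n = 1 := by
  rw [← mul_pow, ENNReal.mul_inv_cancel two_ne_zero ENNReal.ofNat_ne_top, one_pow]

lemma loglog_null_of_null {Ω : Type*} [MeasurableSpace Ω] (μ : Measure Ω)
    (h : Ω → NNReal) (hh : Measurable h) (hpos : ∀ᵐ x ∂μ, 0 < h x)
    {A : Set Ω} (hA : MeasurableSet A)
    (hν : (μ.withDensity fun x => (h x : ℝ≥0∞)) A = 0) : μ A = 0 := by
  rw [withDensity_apply _ hA] at hν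
  have h0 : (fun x => (h x : ℝ≥0∞)) =ᵐ[μ.restrict A] 0 :=
    (lintegral_eq_zero_iff (hh.coe_nnreal_ennreal)).mp hν
  have hpos' : ∀ᵐ x ∂(μ.restrict A), 0 < h x := ae_restrict_of_ae hpos
  have hfalse : ∀ᵐ x ∂(μ.restrict A), False := by
    filter_upwards [h0, hpos'] with x hx1 hx2
    simp only [Pi.zero_apply, ENNReal.coe_eq_zero] at hx1
    exact absurd hx1 hx2.ne'
  have := ae_iff.mp hfalse
  simpa [Measure.restrict_apply_univ] using this

lemma loglog_Fmeas {Ω : Type*} [MeasurableSpace Ω] {f : Ω → ℂ} (hf : Measurable f) :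
    Measurable fun x => ENNReal.ofReal (Real.log (1 + ‖f x‖)) := by
  have habs : (fun x => ‖f x‖) = fun x => ‖f x‖ := by
    simp
  exact ENNReal.measurable_ofReal.comp
    (Real.measurable_log.comp (measurable_const.add (habs ▸ hf.norm)))

theorem loglog_eq_iff_bounded_of_pos {Ω : Type*} [MeasurableSpace Ω]
    (μ : Measure Ω) [SigmaFinite μ] (h : Ω → NNReal) (hh : Measurable h)
    (hpos : ∀ᵐ x ∂μ, 0 < h x) :
    (∀ f : Ω → ℂ, Measurable f →
        (∫⁻ x, ENNReal.ofReal (Real.log (1 + ‖f x‖)) ∂μ < ∞ ↔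
          ∫⁻ x, ENNReal.ofReal (Real.log (1 + ‖f x‖))
            ∂(μ.withDensity fun x => (h x : ENNReal)) < ∞)) ↔
      ∃ c C : NNReal, 0 < c ∧ ∀ᵐ x ∂μ, c ≤ h x ∧ h x ≤ C := by
  constructor
  · -- hard direction
    intro hiff
    by_contra hnot
    have hdisj : ∀ n : ℕ, μ {x | h x < ((2:ℝ≥0)^n)⁻¹} ≠ 0 ∨ μ {x | (2:ℝ≥0)^n < h x} ≠ 0 := by
      intro n
      by_contra hcon
      push_neg at hcon
      refine hnot ⟨((2:ℝ≥0)^n)⁻¹, (2:ℝ≥0)^n, by positivity, ?_⟩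
      rw [ae_iff]
      refine measure_mono_null (fun x hx => ?_) (measure_union_null hcon.1 hcon.2)
      rcases not_and_or.mp hx with hx1 | hx1
      · exact Or.inl (not_le.mp hx1)
      · exact Or.inr (not_le.mp hx1)
    have key : (∀ n : ℕ, μ {x | h x < ((2:ℝ≥0)^n)⁻¹} ≠ 0) ∨
        (∀ n : ℕ, μ {x | (2:ℝ≥0)^n < h x} ≠ 0) := by
      by_contra hcon
      push_neg at hcon
      obtain ⟨⟨n0, hn0⟩, ⟨n1, hn1⟩⟩ := hcon
      set k := max n0 n1 with hk
      have hp0 : (2:ℝ≥0)^n0 ≤ 2^k := pow_le_pow_right₀ one_le_two (le_max_left _ _)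
      have hp1 : (2:ℝ≥0)^n1 ≤ 2^k := pow_le_pow_right₀ one_le_two (le_max_right _ _)
      rcases hdisj k with hkk | hkk
      · refine hkk (measure_mono_null (fun x hx => ?_) hn0)
        exact lt_of_lt_of_le hx (inv_anti₀ (by positivity) hp0)
      · refine hkk (measure_mono_null (fun x hx => ?_) hn1)
        exact lt_of_le_of_lt hp1 hx
    rcases key with hlo | hhi
    · -- h has essentially unbounded inverse: build f against ν
      set ν := μ.withDensity fun x => (h x : ℝ≥0∞) with hν
      have hSm : ∀ n : ℕ, MeasurableSet {x | h x < ((2:ℝ≥0)^n)⁻¹} :=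
        fun n => measurableSet_lt hh measurable_const
      have hνpos : ∀ n : ℕ, 0 < ν {x | h x < ((2:ℝ≥0)^n)⁻¹} := by
        intro n
        refine pos_iff_ne_zero.mpr fun h0 => hlo n ?_
        exact loglog_null_of_null μ h hh hpos (hSm n) h0
      have hex : ∀ n : ℕ, ∃ B, MeasurableSet B ∧ B ⊆ {x | h x < ((2:ℝ≥0)^n)⁻¹} ∧
          0 < ν B ∧ ν B < ∞ :=
        fun n => Measure.exists_subset_measure_lt_top (hSm n) (hνpos n)
      choose B hBm hBsub hBpos hBfin using hex
      set t : ℕ → ℝ≥0∞ := fun n => (2:ℝ≥0∞)⁻¹ ^ n / ν (B n) with ht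
      set g : Ω → ℝ≥0∞ := fun x => ∑' n, (B n).indicator (fun _ => t n) x with hg
      have hgm : Measurable g :=
        Measurable.ennreal_tsum fun n => measurable_const.indicator (hBm n)
      have htmul : ∀ n, t n * ν (B n) = (2:ℝ≥0∞)⁻¹ ^ n := fun n =>
        ENNReal.div_mul_cancel (hBpos n).ne' (hBfin n).ne
      have hintg : ∫⁻ x, g x ∂ν = ∑' n, (2:ℝ≥0∞)⁻¹ ^ n := by
        rw [hg, lintegral_tsum fun n => (measurable_const.indicator (hBm n)).aemeasurable]
        exact tsum_congr fun n => by rw [lintegral_indicator_const (hBm n), htmul]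
      have hgfinν : ∀ᵐ x ∂ν, g x < ∞ :=
        ae_lt_top hgm (by rw [hintg]; exact loglog_tsum_ne_top)
      have hgfinμ : ∀ᵐ x ∂μ, g x < ∞ := by
        have hms : MeasurableSet {x | ¬ g x < ∞} := by
          simp only [not_lt, top_le_iff]
          exact hgm (measurableSet_singleton ∞)
        rw [ae_iff] at hgfinν ⊢
        exact loglog_null_of_null μ h hh hpos hms hgfinν
      set f : Ω → ℂ := fun x => ((Real.exp ((g x).toReal) - 1 : ℝ) : ℂ) with hfdef
      have hfm : Measurable f := Complex.measurable_ofReal.comp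
        ((Real.measurable_exp.comp hgm.ennreal_toReal).sub measurable_const)
      have hFg : ∀ x, g x ≠ ∞ →
          ENNReal.ofReal (Real.log (1 + ‖f x‖)) = g x := fun x hx => by
        rw [hfdef, loglog_abs_helper _ ENNReal.toReal_nonneg, ENNReal.ofReal_toReal hx]
      have hνint : ∫⁻ x, ENNReal.ofReal (Real.log (1 + ‖f x‖)) ∂ν < ∞ := by
        rw [lintegral_congr_ae (hgfinν.mono fun x hx => hFg x hx.ne), hintg]
        exact lt_top_iff_ne_top.mpr loglog_tsum_ne_top
      have hμint : ∫⁻ x, ENNReal.ofReal (Real.log (1 + ‖f x‖)) ∂μ = ∞ := by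
        rw [lintegral_congr_ae (hgfinμ.mono fun x hx => hFg x hx.ne)]
        have hsplit : ∫⁻ x, g x ∂μ = ∑' n, ∫⁻ x, (B n).indicator (fun _ => t n) x ∂μ :=
          lintegral_tsum fun n => (measurable_const.indicator (hBm n)).aemeasurable
        rw [hsplit]
        refine top_unique ?_
        have hterm : ∀ n, 1 ≤ ∫⁻ x, (B n).indicator (fun _ => t n) x ∂μ := by
          intro n
          rw [lintegral_indicator_const (hBm n)]
          -- ν (B n) ≤ (2^n)⁻¹ * μ (B n), so 2^n * ν (B n) ≤ μ (B n)
          have hνle : ν (B n) ≤ ((2:ℝ≥0∞)^n)⁻¹ * μ (B n) := by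
            rw [hν, withDensity_apply _ (hBm n)]
            calc ∫⁻ x in B n, (h x : ℝ≥0∞) ∂μ
                ≤ ∫⁻ _ in B n, ((2:ℝ≥0∞)^n)⁻¹ ∂μ := by
                  refine setLIntegral_mono measurable_const fun x hx => ?_
                  have h1 : h x ≤ ((2:ℝ≥0)^n)⁻¹ := le_of_lt (hBsub n hx)
                  calc ((h x : ℝ≥0) : ℝ≥0∞) ≤ (((2:ℝ≥0)^n)⁻¹ : ℝ≥0) :=
                        ENNReal.coe_le_coe.mpr h1
                    _ = ((2:ℝ≥0∞)^n)⁻¹ := by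
                        rw [ENNReal.coe_inv (by positivity)]
                        rw [ENNReal.coe_pow, ENNReal.coe_ofNat]
              _ = ((2:ℝ≥0∞)^n)⁻¹ * μ (B n) := setLIntegral_const _ _
          have hμge : (2:ℝ≥0∞)^n * ν (B n) ≤ μ (B n) := by
            calc (2:ℝ≥0∞)^n * ν (B n) ≤ (2:ℝ≥0∞)^n * (((2:ℝ≥0∞)^n)⁻¹ * μ (B n)) :=
                  mul_le_mul_right hνle _
              _ = μ (B n) := by
                  rw [← mul_assoc, ENNReal.mul_inv_cancel (by positivity)
                    (pow_ne_top ENNReal.ofNat_ne_top), one_mul]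
          calc (1:ℝ≥0∞) = t n * ((2:ℝ≥0∞)^n * ν (B n)) := by
                rw [mul_comm ((2:ℝ≥0∞)^n), ← mul_assoc, htmul, mul_comm,
                  loglog_pow_mul_inv_pow]
            _ ≤ t n * μ (B n) := mul_le_mul_right hμge _
        calc (⊤:ℝ≥0∞) = ∑' _ : ℕ, (1:ℝ≥0∞) :=
              (ENNReal.tsum_const_eq_top_of_ne_zero one_ne_zero).symm
          _ ≤ _ := ENNReal.tsum_le_tsum hterm
      have := (hiff f hfm).mpr hνint
      rw [hμint] at this
      exact this.ne rfl
    · -- h essentially unbounded above: build f against μ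
      have hSm : ∀ n : ℕ, MeasurableSet {x | (2:ℝ≥0)^n < h x} :=
        fun n => measurableSet_lt measurable_const hh
      have hex : ∀ n : ℕ, ∃ B, MeasurableSet B ∧ B ⊆ {x | (2:ℝ≥0)^n < h x} ∧
          0 < μ B ∧ μ B < ∞ :=
        fun n => Measure.exists_subset_measure_lt_top (hSm n) (pos_iff_ne_zero.mpr (hhi n))
      choose B hBm hBsub hBpos hBfin using hex
      set t : ℕ → ℝ≥0∞ := fun n => (2:ℝ≥0∞)⁻¹ ^ n / μ (B n) with ht
      set g : Ω → ℝ≥0∞ := fun x => ∑' n, (B n).indicator (fun _ => t n) x with hg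
      have hgm : Measurable g :=
        Measurable.ennreal_tsum fun n => measurable_const.indicator (hBm n)
      have htmul : ∀ n, t n * μ (B n) = (2:ℝ≥0∞)⁻¹ ^ n := fun n =>
        ENNReal.div_mul_cancel (hBpos n).ne' (hBfin n).ne
      have hintg : ∫⁻ x, g x ∂μ = ∑' n, (2:ℝ≥0∞)⁻¹ ^ n := by
        rw [hg, lintegral_tsum fun n => (measurable_const.indicator (hBm n)).aemeasurable]
        exact tsum_congr fun n => by rw [lintegral_indicator_const (hBm n), htmul]
      have hgfin : ∀ᵐ x ∂μ, g x < ∞ :=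
        ae_lt_top hgm (by rw [hintg]; exact loglog_tsum_ne_top)
      set f : Ω → ℂ := fun x => ((Real.exp ((g x).toReal) - 1 : ℝ) : ℂ) with hfdef
      have hfm : Measurable f := Complex.measurable_ofReal.comp
        ((Real.measurable_exp.comp hgm.ennreal_toReal).sub measurable_const)
      have hFg : ∀ x, g x ≠ ∞ →
          ENNReal.ofReal (Real.log (1 + ‖f x‖)) = g x := fun x hx => by
        rw [hfdef, loglog_abs_helper _ ENNReal.toReal_nonneg, ENNReal.ofReal_toReal hx]
      have hμint : ∫⁻ x, ENNReal.ofReal (Real.log (1 + ‖f x‖)) ∂μ < ∞ := by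
        rw [lintegral_congr_ae (hgfin.mono fun x hx => hFg x hx.ne), hintg]
        exact lt_top_iff_ne_top.mpr loglog_tsum_ne_top
      have hνint : ∫⁻ x, ENNReal.ofReal (Real.log (1 + ‖f x‖))
          ∂(μ.withDensity fun x => (h x : ℝ≥0∞)) = ∞ := by
        rw [lintegral_withDensity_eq_lintegral_mul μ hh.coe_nnreal_ennreal (loglog_Fmeas hfm)]
        have hcongr : ∫⁻ x, ((fun x => (h x : ℝ≥0∞)) *
            fun x => ENNReal.ofReal (Real.log (1 + ‖f x‖))) x ∂μ
            = ∫⁻ x, (h x : ℝ≥0∞) * g x ∂μ := by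
          refine lintegral_congr_ae (hgfin.mono fun x hx => ?_)
          simp only [Pi.mul_apply]
          rw [hFg x hx.ne]
        rw [hcongr]
        have hsplit : ∫⁻ x, (h x : ℝ≥0∞) * g x ∂μ
            = ∑' n, ∫⁻ x, (h x : ℝ≥0∞) * (B n).indicator (fun _ => t n) x ∂μ := by
          rw [← lintegral_tsum (f := fun n x => (h x : ℝ≥0∞) * (B n).indicator (fun _ => t n) x) fun n =>
            (hh.coe_nnreal_ennreal.mul (measurable_const.indicator (hBm n))).aemeasurable]
          refine lintegral_congr fun x => ?_
          rw [hg]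
          exact (ENNReal.tsum_mul_left).symm
        rw [hsplit]
        refine top_unique ?_
        have hterm : ∀ n, 1 ≤ ∫⁻ x, (h x : ℝ≥0∞) * (B n).indicator (fun _ => t n) x ∂μ := by
          intro n
          have hrw : ∫⁻ x, (h x : ℝ≥0∞) * (B n).indicator (fun _ => t n) x ∂μ
              = ∫⁻ x in B n, (h x : ℝ≥0∞) * t n ∂μ := by
            rw [← lintegral_indicator (hBm n)]
            refine lintegral_congr fun x => ?_
            by_cases hx : x ∈ B n <;> simp [Set.indicator, hx]
          rw [hrw]
          have hlow : ∫⁻ _ in B n, ((2:ℝ≥0∞)^n * t n) ∂μ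
              ≤ ∫⁻ x in B n, (h x : ℝ≥0∞) * t n ∂μ := by
            refine setLIntegral_mono (hh.coe_nnreal_ennreal.mul measurable_const)
              fun x hx => ?_
            refine mul_le_mul_left ?_ _
            have h1 : (2:ℝ≥0)^n ≤ h x := le_of_lt (hBsub n hx)
            calc (2:ℝ≥0∞)^n = (((2:ℝ≥0)^n : ℝ≥0) : ℝ≥0∞) := by norm_cast
              _ ≤ (h x : ℝ≥0∞) := ENNReal.coe_le_coe.mpr h1
          rw [setLIntegral_const] at hlow
          refine le_trans ?_ hlow
          rw [mul_assoc, htmul, loglog_pow_mul_inv_pow]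
        calc (⊤:ℝ≥0∞) = ∑' _ : ℕ, (1:ℝ≥0∞) :=
              (ENNReal.tsum_const_eq_top_of_ne_zero one_ne_zero).symm
          _ ≤ _ := ENNReal.tsum_le_tsum hterm
      have := (hiff f hfm).mp hμint
      rw [hνint] at this
      exact this.ne rfl
  · -- easy direction
    rintro ⟨c, C, hc, hcC⟩ f hf
    set F : Ω → ℝ≥0∞ := fun x => ENNReal.ofReal (Real.log (1 + ‖f x‖)) with hF
    have hFm : Measurable F := loglog_Fmeas hf
    rw [lintegral_withDensity_eq_lintegral_mul μ hh.coe_nnreal_ennreal hFm]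
    constructor
    · intro h1
      have hle : ∫⁻ x, ((fun x => (h x : ℝ≥0∞)) * F) x ∂μ ≤ ∫⁻ x, (C : ℝ≥0∞) * F x ∂μ := by
        refine lintegral_mono_ae ?_
        filter_upwards [hcC] with x hx
        exact mul_le_mul_left (ENNReal.coe_le_coe.mpr hx.2) _
      rw [lintegral_const_mul _ hFm] at hle
      exact hle.trans_lt (ENNReal.mul_lt_top ENNReal.coe_lt_top h1)
    · intro h2
      have hle : ∫⁻ x, (c : ℝ≥0∞) * F x ∂μ ≤ ∫⁻ x, ((fun x => (h x : ℝ≥0∞)) * F) x ∂μ := by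
        refine lintegral_mono_ae ?_
        filter_upwards [hcC] with x hx
        exact mul_le_mul_left (ENNReal.coe_le_coe.mpr hx.1) _
      rw [lintegral_const_mul _ hFm] at hle
      by_contra hcon
      push_neg at hcon
      rw [top_le_iff.mp hcon, ENNReal.mul_top (by exact_mod_cast hc.ne')] at hle
      exact (hle.trans_lt h2).ne rfl
end

section
/- Let (Ω, 𝒜, μ) be a measure space, let h : Ω → ℝ≥0 be measurable, and let (A_k)_{k≥1} be a sequence of pairwise disjoint measurable sets with 0 < μ(A_k) < ∞ for every k ≥ 1 and with h x ≥ k for all x ∈ A_k. Define g : Ω → ℝ≥0∞ by g x = 1/(k² · μ(A_k)) for x ∈ A_k and g x = 0 for x outside ⋃_k A_k. Then ∫⁻ g ∂μ = ∑_{k≥1} 1/k² < ∞, while ∫⁻ g ∂(μ.withDensity h) = ∫⁻ h·g ∂μ = ∞. -/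
open MeasureTheory ENNReal

lemma aux_cast1 (k : ℕ) : ((1 / ((k:NNReal)+1) : NNReal) : ℝ≥0∞) = 1 / ((k : ENNReal) + 1) := by
  rw [ENNReal.coe_div (by positivity)]
  norm_cast
  rw [ENNReal.coe_div (by positivity)]
  simp

lemma aux_cast2 (k : ℕ) : ((1 / ((k:NNReal)+1)^2 : NNReal) : ℝ≥0∞) = 1 / ((k : ENNReal) + 1)^2 := by
  rw [ENNReal.coe_div (by positivity)]
  norm_cast
  rw [ENNReal.coe_div (by positivity)]
  simp

lemma aux_harmonic : (∑' k : ℕ, 1 / ((k : ENNReal) + 1)) = ∞ := by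
  by_contra hne
  have h1 : (∑' k : ℕ, ((1 / ((k:NNReal)+1) : NNReal) : ℝ≥0∞)) ≠ ∞ := by
    simpa only [aux_cast1] using hne
  have h2 : Summable (fun k : ℕ => (1 / ((k:NNReal)+1) : NNReal)) :=
    ENNReal.tsum_coe_ne_top_iff_summable.1 h1
  have h3 : Summable (fun k : ℕ => (1 / ((k:ℝ)+1) : ℝ)) := by
    have := NNReal.summable_coe.2 h2
    simpa using this
  have h4 : Summable (fun k : ℕ => (1 / (k:ℝ) : ℝ)) := by
    rw [← summable_nat_add_iff 1]
    simpa using h3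
  exact Real.not_summable_one_div_natCast h4

lemma aux_basel : (∑' k : ℕ, 1 / ((k : ENNReal) + 1) ^ 2) < ∞ := by
  have h4 : Summable (fun k : ℕ => (1 / (k:ℝ) ^ 2 : ℝ)) :=
    Real.summable_one_div_nat_pow.2 one_lt_two
  have h3 : Summable (fun k : ℕ => (1 / ((k:ℝ)+1) ^ 2 : ℝ)) := by
    have := (summable_nat_add_iff 1).2 h4
    simpa using this
  have h2 : Summable (fun k : ℕ => (1 / ((k:NNReal)+1) ^ 2 : NNReal)) := by
    rw [← NNReal.summable_coe]
    simpa using h3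
  have h1 := ENNReal.tsum_coe_ne_top_iff_summable.2 h2
  rw [lt_top_iff_ne_top]
  simpa only [aux_cast2] using h1

lemma aux_inv_mul (n m : ℝ≥0∞) (hn0 : n ≠ 0) (hnt : n ≠ ∞) (hm0 : m ≠ 0) (hmt : m ≠ ∞) :
    1/(n^2*m) * m = 1/n^2 := by
  rw [one_div, one_div, ENNReal.mul_inv (Or.inl (pow_ne_zero 2 hn0)) (Or.inr hm0),
    mul_assoc, ENNReal.inv_mul_cancel hm0 hmt, mul_one]

lemma aux_mul_inv_sq (n : ℝ≥0∞) (hn0 : n ≠ 0) (hnt : n ≠ ∞) : n * (1/n^2) = 1/n := by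
  rw [one_div, one_div, pow_two, ENNReal.mul_inv (Or.inl hn0) (Or.inl hnt), ← mul_assoc,
    ENNReal.mul_inv_cancel hn0 hnt, one_mul]

theorem lintegral_counterexample_construction {Ω : Type*} [MeasurableSpace Ω]
    (μ : Measure Ω) (h : Ω → NNReal) (hh : Measurable h)
    (A : ℕ → Set Ω) (hAmeas : ∀ k, 1 ≤ k → MeasurableSet (A k))
    (hdisj : ∀ j k, 1 ≤ j → 1 ≤ k → j ≠ k → Disjoint (A j) (A k))
    (hpos : ∀ k, 1 ≤ k → 0 < μ (A k)) (hfin : ∀ k, 1 ≤ k → μ (A k) < ∞)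
    (hgeq : ∀ k, 1 ≤ k → ∀ x ∈ A k, (k : NNReal) ≤ h x)
    (g : Ω → ENNReal)
    (hg_on : ∀ k, 1 ≤ k → ∀ x ∈ A k, g x = 1 / ((k : ENNReal) ^ 2 * μ (A k)))
    (hg_off : ∀ x, x ∉ ⋃ k ∈ {k : ℕ | 1 ≤ k}, A k → g x = 0) :
    (∫⁻ x, g x ∂μ = ∑' k : ℕ, 1 / ((k : ENNReal) + 1) ^ 2) ∧
      (∑' k : ℕ, 1 / ((k : ENNReal) + 1) ^ 2 < ∞) ∧
      (∫⁻ x, g x ∂(μ.withDensity fun x => (h x : ENNReal)) =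
        ∫⁻ x, (h x : ENNReal) * g x ∂μ) ∧
      ∫⁻ x, (h x : ENNReal) * g x ∂μ = ∞ := by
  set c : ℕ → ℝ≥0∞ := fun k => 1 / ((k : ENNReal) ^ 2 * μ (A k)) with hc
  -- x not in A (j+1) for j ≠ k when x ∈ A (k+1)
  have hnotmem : ∀ x k j, j ≠ k → x ∈ A (k+1) → x ∉ A (j+1) := by
    intro x k j hjk hx
    exact fun hxj => Set.disjoint_left.1
      (hdisj (j+1) (k+1) (by omega) (by omega) (by omega)) hxj hx
  have hgrep : ∀ x, g x = ∑' k : ℕ, (A (k+1)).indicator (fun _ => c (k+1)) x := by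
    intro x
    by_cases hx : ∃ j, x ∈ A (j+1)
    · obtain ⟨j, hj⟩ := hx
      rw [hg_on (j+1) (by omega) x hj,
        tsum_eq_single j (fun k hk => Set.indicator_of_notMem (hnotmem x j k hk hj) _),
        Set.indicator_of_mem hj]
    · rw [hg_off x (by
        simp only [Set.mem_iUnion, Set.mem_setOf_eq, not_exists]
        intro k hk hxk
        exact hx ⟨k - 1, by simpa [Nat.sub_add_cancel hk] using hxk⟩)]
      symm
      exact ENNReal.tsum_eq_zero.2 fun k =>
        Set.indicator_of_notMem (fun hxk => hx ⟨k, hxk⟩) _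
  have hmeas_ind : ∀ k : ℕ, Measurable ((A (k+1)).indicator (fun _ => c (k+1))) :=
    fun k => measurable_const.indicator (hAmeas (k+1) (by omega))
  have hmg : Measurable g := by
    have : g = fun x => ∑' k : ℕ, (A (k+1)).indicator (fun _ => c (k+1)) x := funext hgrep
    rw [this]
    exact Measurable.ennreal_tsum hmeas_ind
  -- basic facts on each term
  have hterm : ∀ k : ℕ, c (k+1) * μ (A (k+1)) = 1 / ((k : ENNReal) + 1) ^ 2 := by
    intro k
    have h1 : ((k:ENNReal) + 1) ≠ 0 := by simp
    have h2 : ((k:ENNReal) + 1) ≠ ∞ := by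
      simp [ENNReal.add_ne_top]
    have := aux_inv_mul ((k:ENNReal)+1) (μ (A (k+1))) h1 h2
      (hpos (k+1) (by omega)).ne' (hfin (k+1) (by omega)).ne
    rw [hc]
    push_cast
    exact this
  have hint1 : ∫⁻ x, g x ∂μ = ∑' k : ℕ, 1 / ((k : ENNReal) + 1) ^ 2 := by
    simp only [hgrep]
    rw [lintegral_tsum (fun k => (hmeas_ind k).aemeasurable)]
    congr 1
    funext k
    rw [lintegral_indicator_const (hAmeas (k+1) (by omega))]
    exact hterm k
  refine ⟨hint1, aux_basel, ?_, ?_⟩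
  · rw [lintegral_withDensity_eq_lintegral_mul μ (by exact hh.coe_nnreal_ennreal) hmg]
    rfl
  · rw [eq_top_iff, ← aux_harmonic]
    -- lower bound function
    have hlow : ∀ x, (∑' k : ℕ, (A (k+1)).indicator
        (fun _ => ((k : ENNReal) + 1) * c (k+1)) x) ≤ (h x : ENNReal) * g x := by
      intro x
      by_cases hx : ∃ j, x ∈ A (j+1)
      · obtain ⟨j, hj⟩ := hx
        rw [tsum_eq_single j (fun k hk => Set.indicator_of_notMem (hnotmem x j k hk hj) _),
          Set.indicator_of_mem hj, hgrep x,
          tsum_eq_single j (fun k hk => Set.indicator_of_notMem (hnotmem x j k hk hj) _),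
          Set.indicator_of_mem hj]
        refine mul_le_mul_left ?_ _
        have := hgeq (j+1) (by omega) x hj
        have h2 : (((j+1 : ℕ) : NNReal) : ENNReal) ≤ (h x : ENNReal) :=
          ENNReal.coe_le_coe.2 this
        calc ((j : ENNReal) + 1) = (((j+1 : ℕ) : NNReal) : ENNReal) := by push_cast; ring
          _ ≤ _ := h2
      · calc (∑' k : ℕ, (A (k+1)).indicator
            (fun _ => ((k : ENNReal) + 1) * c (k+1)) x) = 0 :=
              ENNReal.tsum_eq_zero.2 fun k =>
                Set.indicator_of_notMem (fun hxk => hx ⟨k, hxk⟩) _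
          _ ≤ _ := zero_le
    calc ∑' k : ℕ, 1 / ((k : ENNReal) + 1)
        = ∫⁻ x, ∑' k : ℕ, (A (k+1)).indicator
            (fun _ => ((k : ENNReal) + 1) * c (k+1)) x ∂μ := by
          rw [lintegral_tsum (fun k =>
            (measurable_const.indicator (hAmeas (k+1) (by omega))).aemeasurable)]
          congr 1
          funext k
          rw [lintegral_indicator_const (hAmeas (k+1) (by omega)), mul_assoc, hterm k]
          exact (aux_mul_inv_sq ((k:ENNReal)+1) (by simp) (by simp [ENNReal.add_ne_top])).symm
      _ ≤ ∫⁻ x, (h x : ENNReal) * g x ∂μ := lintegral_mono hlow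
end
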